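/- For every m ≥ 2, the polynomials D_m satisfy the three-term recurrence D_m(q) = (1+q)·D_{m−1}(q) + (q^{m−1} − q)·D_{m−2}(q), with D₀(q) = D₁(q) = 1. -/
import Mathlib
open Multiset

namespace P5


lemma sup_mem {M : Multiset ℕ} (h : M ≠ 0) : M.sup ∈ M := by
  induction M using Multiset.induction with
  | empty => simp at h
  | cons a t ih =>
    rcases eq_or_ne t 0 with rfl | ht
    · simp
    · rw [Multiset.sup_cons]
      rcases le_total a t.sup with h1 | h1
      · rw [sup_eq_right.mpr h1]; exact Multiset.mem_cons_of_mem (ih ht)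
      · rw [sup_eq_left.mpr h1]; exact Multiset.mem_cons_self a t

lemma erase_le_sub_one {M : Multiset ℕ} (hc : M.count M.sup = 1) :
    ∀ x ∈ M.erase M.sup, x ≤ M.sup - 1 := by
  intro x hx
  have hxM := Multiset.mem_of_mem_erase hx
  have hle : x ≤ M.sup := Multiset.le_sup hxM
  have hne : x ≠ M.sup := by
    intro rfl2
    have h0 := Multiset.count_erase_self M.sup M
    rw [hc] at h0
    have hx0 : x ∉ M.erase M.sup := by
      rw [rfl2, ← Multiset.count_eq_zero, h0]
    exact hx0 hx
  omega

lemma sup_cons_erase_down {M : Multiset ℕ} (hc : M.count M.sup = 1) :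
    ((M.sup - 1) ::ₘ M.erase M.sup).sup = M.sup - 1 := by
  rw [Multiset.sup_cons]
  exact sup_eq_left.mpr (Multiset.sup_le.mpr (erase_le_sub_one hc))

lemma sup_cons_erase_up {M : Multiset ℕ} :
    ((M.sup + 1) ::ₘ M.erase M.sup).sup = M.sup + 1 := by
  rw [Multiset.sup_cons]
  exact sup_eq_left.mpr (Multiset.sup_le.mpr fun x hx =>
    le_trans (Multiset.le_sup (Multiset.mem_of_mem_erase hx)) (by omega))

lemma count_cons_erase_up {M : Multiset ℕ} :
    ((M.sup + 1) ::ₘ M.erase M.sup).count (M.sup + 1) = 1 := by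
  rw [Multiset.count_cons_self]
  have : (M.sup + 1) ∉ M.erase M.sup := by
    intro hx
    have := Multiset.le_sup (Multiset.mem_of_mem_erase hx)
    omega
  rw [Multiset.count_eq_zero.mpr this]

lemma parts_ne {n : ℕ} (p : Nat.Partition (n + 1)) : p.parts ≠ 0 := by
  intro h
  have := p.parts_sum
  rw [h] at this
  simp at this

def sp (M : Multiset ℕ) : ℕ := M.sup + Multiset.card M

def Nn (m j : ℕ) : ℕ := (Finset.univ.filter fun p : Nat.Partition j => sp p.parts ≤ m).card

def Ee (m j : ℕ) : ℕ := (Finset.univ.filter fun p : Nat.Partition j => sp p.parts = m).card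

def downA {n : ℕ} (p : Nat.Partition (n + 1)) (h2 : 2 ≤ p.parts.sup) : Nat.Partition n where
  parts := (p.parts.sup - 1) ::ₘ p.parts.erase p.parts.sup
  parts_pos := by
    intro x hx
    rcases Multiset.mem_cons.mp hx with rfl | hx
    · omega
    · exact p.parts_pos (Multiset.mem_of_mem_erase hx)
  parts_sum := by
    have hm : p.parts.sup ∈ p.parts := sup_mem (parts_ne p)
    have hs := Multiset.sum_erase hm
    have := p.parts_sum
    rw [Multiset.sum_cons]
    omega

def upA {n : ℕ} (q : Nat.Partition n) (h1 : q.parts ≠ 0) : Nat.Partition (n + 1) where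
  parts := (q.parts.sup + 1) ::ₘ q.parts.erase q.parts.sup
  parts_pos := by
    intro x hx
    rcases Multiset.mem_cons.mp hx with rfl | hx
    · omega
    · exact q.parts_pos (Multiset.mem_of_mem_erase hx)
  parts_sum := by
    have hm : q.parts.sup ∈ q.parts := sup_mem h1
    have hs := Multiset.sum_erase hm
    have := q.parts_sum
    rw [Multiset.sum_cons]
    omega

lemma cardA (μ i : ℕ) :
    (Finset.univ.filter fun p : Nat.Partition (i + 1) =>
      sp p.parts = μ + 2 ∧ 2 ≤ p.parts.sup ∧ p.parts.count p.parts.sup = 1).card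
    = Ee (μ + 1) i := by
  rw [Ee]
  refine Finset.card_bij'
    (fun p hp => downA p (by simp only [Finset.mem_filter] at hp; exact hp.2.2.1))
    (fun q hq => upA q (by
      simp only [Finset.mem_filter] at hq
      intro h0
      rw [sp, h0] at hq
      simp at hq)) ?_ ?_ ?_ ?_
  · intro p hp
    simp only [Finset.mem_filter] at hp ⊢
    obtain ⟨-, hsp, h2, hc⟩ := hp
    refine ⟨Finset.mem_univ _, ?_⟩
    have hm : p.parts.sup ∈ p.parts := sup_mem (parts_ne p)
    have hcard : Multiset.card (p.parts.erase p.parts.sup) = Multiset.card p.parts - 1 :=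
      Multiset.card_erase_of_mem hm
    have hcpos : 0 < Multiset.card p.parts := Multiset.card_pos.mpr (parts_ne p)
    show ((p.parts.sup - 1) ::ₘ p.parts.erase p.parts.sup).sup
      + Multiset.card ((p.parts.sup - 1) ::ₘ p.parts.erase p.parts.sup) = μ + 1
    rw [sup_cons_erase_down hc, Multiset.card_cons, hcard]
    rw [sp] at hsp
    omega
  · intro q hq
    simp only [Finset.mem_filter] at hq ⊢
    obtain ⟨-, hsp⟩ := hq
    have h1 : q.parts ≠ 0 := by
      intro h0; rw [sp, h0] at hsp; simp at hsp
    have hm : q.parts.sup ∈ q.parts := sup_mem h1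
    have hsup1 : 1 ≤ q.parts.sup := q.parts_pos hm
    have hcard : Multiset.card (q.parts.erase q.parts.sup) = Multiset.card q.parts - 1 :=
      Multiset.card_erase_of_mem hm
    have hcpos : 0 < Multiset.card q.parts := Multiset.card_pos.mpr h1
    refine ⟨Finset.mem_univ _, ?_, ?_, ?_⟩
    · show ((q.parts.sup + 1) ::ₘ q.parts.erase q.parts.sup).sup
        + Multiset.card ((q.parts.sup + 1) ::ₘ q.parts.erase q.parts.sup) = μ + 2
      rw [sup_cons_erase_up, Multiset.card_cons, hcard]
      rw [sp] at hsp
      omega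
    · show 2 ≤ ((q.parts.sup + 1) ::ₘ q.parts.erase q.parts.sup).sup
      rw [sup_cons_erase_up]; omega
    · show (((q.parts.sup + 1) ::ₘ q.parts.erase q.parts.sup)).count
        (((q.parts.sup + 1) ::ₘ q.parts.erase q.parts.sup)).sup = 1
      rw [sup_cons_erase_up]
      exact count_cons_erase_up
  · intro p hp
    simp only [Finset.mem_filter] at hp
    obtain ⟨-, hsp, h2, hc⟩ := hp
    apply Nat.Partition.ext
    show ((downA p h2).parts.sup + 1) ::ₘ (downA p h2).parts.erase (downA p h2).parts.sup = p.parts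
    have hQ : (downA p h2).parts = (p.parts.sup - 1) ::ₘ p.parts.erase p.parts.sup := rfl
    rw [hQ, sup_cons_erase_down hc, Multiset.erase_cons_head]
    have : p.parts.sup - 1 + 1 = p.parts.sup := by omega
    rw [this]
    exact Multiset.cons_erase (sup_mem (parts_ne p))
  · intro q hq
    simp only [Finset.mem_filter] at hq
    obtain ⟨-, hsp⟩ := hq
    have h1 : q.parts ≠ 0 := by
      intro h0; rw [sp, h0] at hsp; simp at hsp
    have hm : q.parts.sup ∈ q.parts := sup_mem h1
    apply Nat.Partition.ext
    show ((upA q h1).parts.sup - 1) ::ₘ (upA q h1).parts.erase (upA q h1).parts.sup = q.parts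
    have hQ : (upA q h1).parts = (q.parts.sup + 1) ::ₘ q.parts.erase q.parts.sup := rfl
    rw [hQ, sup_cons_erase_up, Multiset.erase_cons_head]
    have : q.parts.sup + 1 - 1 = q.parts.sup := by omega
    rw [this]
    exact Multiset.cons_erase hm


lemma map_sub_one_sum (M : Multiset ℕ) (h : ∀ x ∈ M, 0 < x) :
    (M.map (· - 1)).sum + Multiset.card M = M.sum := by
  induction M using Multiset.induction with
  | empty => simp
  | cons a t ih =>
    simp only [Multiset.map_cons, Multiset.sum_cons, Multiset.card_cons]
    have ha : 0 < a := h a (Multiset.mem_cons_self a t)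
    have := ih (fun x hx => h x (Multiset.mem_cons_of_mem hx))
    omega

lemma filter_pos_sum (M : Multiset ℕ) : (M.filter (fun x => 0 < x)).sum = M.sum := by
  induction M using Multiset.induction with
  | empty => simp
  | cons a t ih =>
    by_cases ha : 0 < a
    · rw [Multiset.filter_cons_of_pos _ ha, Multiset.sum_cons, Multiset.sum_cons, ih]
    · rw [Multiset.filter_cons_of_neg _ ha, Multiset.sum_cons, ih]; omega

lemma restore (M : Multiset ℕ) :
    (((M.map (· - 1)).filter (fun x => 0 < x)).map (· + 1)) = M.filter (fun x => 2 ≤ x) := by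
  induction M using Multiset.induction with
  | empty => simp
  | cons a t ih =>
    by_cases ha : 2 ≤ a
    · rw [Multiset.map_cons, Multiset.filter_cons_of_pos _ (by omega : 0 < a - 1),
        Multiset.map_cons, Multiset.filter_cons_of_pos _ ha, ih]
      congr 1; omega
    · rw [Multiset.map_cons, Multiset.filter_cons_of_neg _ (by omega : ¬ 0 < a - 1),
        Multiset.filter_cons_of_neg _ ha, ih]

def nuM (M : Multiset ℕ) : Multiset ℕ :=
  ((M.erase M.sup).map (· - 1)).filter (fun x => 0 < x)

def bigM (μ : ℕ) (M : Multiset ℕ) : Multiset ℕ :=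
  (M.sup + 1) ::ₘ (M.map (· + 1) + Multiset.replicate (μ - M.sup - Multiset.card M) 1)

lemma nuM_le {M : Multiset ℕ} : ∀ y ∈ nuM M, y + 1 ∈ M.erase M.sup ∧ y + 1 ≤ M.sup := by
  intro y hy
  have : y + 1 ∈ (nuM M).map (· + 1) := Multiset.mem_map_of_mem _ hy
  rw [nuM, restore, Multiset.mem_filter] at this
  exact ⟨this.1, Multiset.le_sup (Multiset.mem_of_mem_erase this.1)⟩

lemma map_add_one_sum (M : Multiset ℕ) : (M.map (· + 1)).sum = M.sum + Multiset.card M := by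
  induction M using Multiset.induction with
  | empty => simp
  | cons a t ih =>
    simp only [Multiset.map_cons, Multiset.sum_cons, Multiset.card_cons]
    omega

lemma sup_bigM (μ : ℕ) (M : Multiset ℕ) : (bigM μ M).sup = M.sup + 1 := by
  rw [bigM, Multiset.sup_cons]
  apply sup_eq_left.mpr
  apply Multiset.sup_le.mpr
  intro x hx
  rcases Multiset.mem_add.mp hx with hx | hx
  · obtain ⟨y, hy, rfl⟩ := Multiset.mem_map.mp hx
    have := Multiset.le_sup hy
    omega
  · have := (Multiset.eq_of_mem_replicate hx)
    omega

lemma card_bigM (μ : ℕ) (M : Multiset ℕ) (h : M.sup + Multiset.card M ≤ μ) :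
    Multiset.card (bigM μ M) = μ + 1 - M.sup := by
  rw [bigM]
  simp only [Multiset.card_cons, Multiset.card_add, Multiset.card_map, Multiset.card_replicate]
  omega

lemma sum_bigM (μ : ℕ) (M : Multiset ℕ) (h : M.sup + Multiset.card M ≤ μ) :
    (bigM μ M).sum = M.sum + μ + 1 := by
  rw [bigM]
  simp only [Multiset.sum_cons, Multiset.sum_add, Multiset.sum_replicate, smul_eq_mul, mul_one]
  have := map_add_one_sum M
  omega


lemma nuM_pos {M : Multiset ℕ} : ∀ x ∈ nuM M, 0 < x := fun _ hx => Multiset.of_mem_filter hx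

lemma nuM_sum {n : ℕ} (p : Nat.Partition (n + 1)) :
    (nuM p.parts).sum + Multiset.card p.parts + p.parts.sup = n + 2 := by
  have hm : p.parts.sup ∈ p.parts := sup_mem (parts_ne p)
  have hEpos : ∀ x ∈ p.parts.erase p.parts.sup, 0 < x :=
    fun x hx => p.parts_pos (Multiset.mem_of_mem_erase hx)
  have h1 := filter_pos_sum ((p.parts.erase p.parts.sup).map (· - 1))
  have h2 := map_sub_one_sum _ hEpos
  have h3 := Multiset.sum_erase hm
  have h4 : Multiset.card (p.parts.erase p.parts.sup) = Multiset.card p.parts - 1 := by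
    rw [Multiset.card_erase_of_mem hm]; rfl
  have h5 : 0 < Multiset.card p.parts := Multiset.card_pos.mpr (parts_ne p)
  have h6 := p.parts_sum
  rw [nuM]
  omega

lemma nuM_sup_le {M : Multiset ℕ} : (nuM M).sup ≤ M.sup - 1 := by
  apply Multiset.sup_le.mpr
  intro y hy
  have := (nuM_le y hy).2
  omega

lemma nuM_card_le {M : Multiset ℕ} :
    Multiset.card (nuM M) ≤ Multiset.card (M.erase M.sup) := by
  rw [nuM]
  calc Multiset.card (((M.erase M.sup).map (· - 1)).filter (fun x => 0 < x))
      ≤ Multiset.card ((M.erase M.sup).map (· - 1)) :=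
        Multiset.card_le_card (Multiset.filter_le _ _)
    _ = Multiset.card (M.erase M.sup) := Multiset.card_map _ _

lemma cardB (μ i : ℕ) (h : μ ≤ i) :
    (Finset.univ.filter fun p : Nat.Partition (i + 1) =>
      sp p.parts = μ + 2 ∧ ¬(2 ≤ p.parts.sup ∧ p.parts.count p.parts.sup = 1)).card
    = Nn μ (i - μ) := by
  rw [Nn]
  refine Finset.card_bij'
    (fun p hp =>
      { parts := nuM p.parts
        parts_pos := fun hx => nuM_pos _ hx
        parts_sum := by
          simp only [Finset.mem_filter] at hp
          have h1 := nuM_sum p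
          have h2 : sp p.parts = μ + 2 := hp.2.1
          rw [sp] at h2
          omega })
    (fun r hr =>
      { parts := bigM μ r.parts
        parts_pos := by
          intro x hx
          rw [bigM] at hx
          rcases Multiset.mem_cons.mp hx with rfl | hx
          · omega
          · rcases Multiset.mem_add.mp hx with hx | hx
            · obtain ⟨y, hy, rfl⟩ := Multiset.mem_map.mp hx; omega
            · rw [Multiset.eq_of_mem_replicate hx]; omega
        parts_sum := by
          simp only [Finset.mem_filter] at hr
          have h1 : sp r.parts ≤ μ := hr.2
          rw [sp] at h1
          rw [sum_bigM μ r.parts h1, r.parts_sum]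
          omega }) ?_ ?_ ?_ ?_
  · intro p hp
    simp only [Finset.mem_filter] at hp ⊢
    refine ⟨Finset.mem_univ _, ?_⟩
    obtain ⟨-, hsp, -⟩ := hp
    rw [sp] at hsp ⊢
    have h1 : (nuM p.parts).sup ≤ p.parts.sup - 1 := nuM_sup_le
    have h2 : Multiset.card (nuM p.parts) ≤ Multiset.card (p.parts.erase p.parts.sup) :=
      nuM_card_le
    have hm : p.parts.sup ∈ p.parts := sup_mem (parts_ne p)
    have h3 : Multiset.card (p.parts.erase p.parts.sup) = Multiset.card p.parts - 1 := by
      rw [Multiset.card_erase_of_mem hm]; rfl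
    have h4 : 1 ≤ p.parts.sup := p.parts_pos hm
    have h5 : 0 < Multiset.card p.parts := Multiset.card_pos.mpr (parts_ne p)
    omega
  · intro r hr
    simp only [Finset.mem_filter] at hr ⊢
    refine ⟨Finset.mem_univ _, ?_, ?_⟩
    · obtain ⟨-, hle⟩ := hr
      rw [sp] at hle ⊢
      rw [sup_bigM, card_bigM μ r.parts hle]
      omega
    · rintro ⟨h2s, hc1⟩
      rw [sup_bigM] at h2s hc1
      have hb1 : 1 ≤ r.parts.sup := by omega
      have hne : r.parts ≠ 0 := by
        intro h0
        rw [h0] at hb1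
        simp [Multiset.sup_zero] at hb1
      have hmem : r.parts.sup + 1 ∈ r.parts.map (· + 1) :=
        Multiset.mem_map_of_mem _ (sup_mem hne)
      rw [bigM, Multiset.count_cons_self] at hc1
      have : r.parts.sup + 1 ∈ r.parts.map (· + 1)
          + Multiset.replicate (μ - r.parts.sup - Multiset.card r.parts) 1 :=
        Multiset.mem_add.mpr (Or.inl hmem)
      rw [← Multiset.count_pos] at this
      omega
  · intro p hp
    simp only [Finset.mem_filter] at hp
    obtain ⟨-, hsp, hB⟩ := hp
    rw [sp] at hsp
    apply Nat.Partition.ext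
    show bigM μ (nuM p.parts) = p.parts
    set a := p.parts.sup with ha
    set E := p.parts.erase a with hE
    have hm : a ∈ p.parts := sup_mem (parts_ne p)
    have ha1 : 1 ≤ a := p.parts_pos hm
    have hEpos : ∀ x ∈ E, 0 < x := fun x hx => p.parts_pos (Multiset.mem_of_mem_erase hx)
    have hmapν : (nuM p.parts).map (· + 1) = E.filter (fun x => 2 ≤ x) := restore E
    have hsupν : (nuM p.parts).sup = a - 1 := by
      by_cases h2 : 2 ≤ a
      · have hcnt : p.parts.count a ≠ 1 := fun hc => hB ⟨h2, hc⟩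
        have hcp : 0 < p.parts.count a := Multiset.count_pos.mpr hm
        have hmemE : a ∈ E := by
          rw [← Multiset.count_pos, hE, Multiset.count_erase_self]
          omega
        have hmem' : a ∈ (nuM p.parts).map (· + 1) := by
          rw [hmapν]
          exact Multiset.mem_filter.mpr ⟨hmemE, h2⟩
        obtain ⟨x, hxν, hxa⟩ := Multiset.mem_map.mp hmem'
        apply le_antisymm
        · have := nuM_sup_le (M := p.parts)
          omega
        · have := Multiset.le_sup hxν
          omega
      · have hν0 : nuM p.parts = 0 := by
          have hmap0 : (nuM p.parts).map (· + 1) = 0 := by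
            rw [hmapν]
            apply Multiset.filter_eq_nil.mpr
            intro x hxE
            have : x ≤ a := Multiset.le_sup (Multiset.mem_of_mem_erase hxE)
            omega
          simpa using hmap0
        rw [hν0]
        simp
        omega
    have hfilter2 : E.filter (fun x => ¬ 2 ≤ x) = Multiset.replicate (E.count 1) 1 := by
      rw [← Multiset.filter_eq']
      apply Multiset.filter_congr
      intro x hx
      have := hEpos x hx
      constructor
      · intro hx2; omega
      · intro hx2; omega
    have hsplitE := Multiset.filter_add_not (fun x => 2 ≤ x) E
    have hcards : Multiset.card E = Multiset.card p.parts - 1 := by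
      rw [hE, Multiset.card_erase_of_mem hm]; rfl
    have hcpos : 0 < Multiset.card p.parts := Multiset.card_pos.mpr (parts_ne p)
    have hcardsplit : Multiset.card (E.filter (fun x => 2 ≤ x))
        + Multiset.card (E.filter (fun x => ¬ 2 ≤ x)) = Multiset.card E := by
      rw [← Multiset.card_add, hsplitE]
    have hcardν : Multiset.card (nuM p.parts) = Multiset.card (E.filter (fun x => 2 ≤ x)) := by
      rw [← hmapν, Multiset.card_map]
    have hcardrep : Multiset.card (E.filter (fun x => ¬ 2 ≤ x)) = E.count 1 := by
      rw [hfilter2, Multiset.card_replicate]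
    have hk : μ - (a - 1) - Multiset.card (nuM p.parts) = E.count 1 := by
      omega
    rw [bigM, hsupν, hmapν, hk, ← hfilter2]
    have haa : a - 1 + 1 = a := by omega
    rw [haa, hsplitE]
    exact Multiset.cons_erase hm
  · intro r hr
    apply Nat.Partition.ext
    show nuM (bigM μ r.parts) = r.parts
    have hsup := sup_bigM μ r.parts
    rw [nuM, hsup, bigM, Multiset.erase_cons_head, Multiset.map_add, Multiset.map_map,
      Multiset.map_replicate]
    have h1 : r.parts.map ((fun x => x - 1) ∘ (fun x => x + 1)) = r.parts := by
      have := Multiset.map_congr (f := (fun x => x - 1) ∘ (fun x => x + 1)) (g := id)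
        (rfl : r.parts = r.parts) (fun x _ => by simp)
      rw [this, Multiset.map_id]
    rw [h1, Multiset.filter_add]
    have h2 : r.parts.filter (fun x => 0 < x) = r.parts :=
      Multiset.filter_eq_self.mpr (fun x hx => r.parts_pos hx)
    have h3 : (Multiset.replicate (μ - r.parts.sup - Multiset.card r.parts) ((1:ℕ) - 1)).filter
        (fun x => 0 < x) = 0 := by
      apply Multiset.filter_eq_nil.mpr
      intro x hx
      rw [Multiset.eq_of_mem_replicate hx]
      omega
    rw [h2, h3, add_zero]


lemma Nn_zero (m : ℕ) : Nn m 0 = 1 := by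
  have h : ∀ p : Nat.Partition 0, sp p.parts ≤ m := by
    intro p; rw [Nat.Partition.partition_zero_parts]; simp [sp]
  rw [Nn, Finset.filter_true_of_mem (fun p _ => h p), Finset.card_univ, Fintype.card_unique]

lemma Nn_pos_zero {j m : ℕ} (hm : m ≤ 1) : Nn m (j + 1) = 0 := by
  rw [Nn, Finset.card_eq_zero, Finset.filter_eq_empty_iff]
  intro p _
  have hm2 : p.parts.sup ∈ p.parts := sup_mem (parts_ne p)
  have h1 : 1 ≤ p.parts.sup := p.parts_pos hm2
  have h2 : 0 < Multiset.card p.parts := Multiset.card_pos.mpr (parts_ne p)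
  rw [sp]
  omega

lemma sp_le {j : ℕ} (p : Nat.Partition j) : sp p.parts ≤ j + 1 := by
  rcases eq_or_ne p.parts 0 with h | h
  · simp [sp, h]
  · have hm := sup_mem h
    have hs := Multiset.sum_erase (s := p.parts) hm
    have h1 : Multiset.card (p.parts.erase p.parts.sup) ≤ (p.parts.erase p.parts.sup).sum := by
      have hpos : ∀ x ∈ p.parts.erase p.parts.sup, 0 < x :=
        fun x hx => p.parts_pos (Multiset.mem_of_mem_erase hx)
      have := map_sub_one_sum (p.parts.erase p.parts.sup) hpos
      omega
    have hcard : Multiset.card (p.parts.erase p.parts.sup) = Multiset.card p.parts - 1 := by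
      rw [Multiset.card_erase_of_mem hm]; rfl
    have hcpos : 0 < Multiset.card p.parts := Multiset.card_pos.mpr h
    have hsum := p.parts_sum
    rw [sp]
    omega

lemma Ee_zero {m j : ℕ} (h : j + 1 < m) : Ee m j = 0 := by
  rw [Ee, Finset.card_eq_zero, Finset.filter_eq_empty_iff]
  intro p _
  have := sp_le p
  omega

lemma Nn_succ (m j : ℕ) : Nn (m + 1) j = Nn m j + Ee (m + 1) j := by
  rw [Nn, Nn, Ee]
  have hs : (Finset.univ.filter fun p : Nat.Partition j => sp p.parts ≤ m + 1)
      = (Finset.univ.filter fun p : Nat.Partition j => sp p.parts ≤ m)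
        ∪ (Finset.univ.filter fun p : Nat.Partition j => sp p.parts = m + 1) := by
    rw [← Finset.filter_or]; apply Finset.filter_congr; intro p _
    constructor <;> (intro h; omega)
  rw [hs, Finset.card_union_of_disjoint]
  apply Finset.disjoint_left.mpr
  intro p hp hq
  simp only [Finset.mem_filter] at hp hq
  omega

lemma Nn_stab {m j : ℕ} (h : j + 1 ≤ m) : Nn (m + 1) j = Nn m j := by
  rw [Nn_succ, Ee_zero (by omega), add_zero]

lemma core (μ i : ℕ) (h : μ ≤ i) : Ee (μ + 2) (i + 1) = Ee (μ + 1) i + Nn μ (i - μ) := by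
  rw [Ee]
  have hsplit : (Finset.univ.filter fun p : Nat.Partition (i + 1) => sp p.parts = μ + 2)
      = (Finset.univ.filter fun p : Nat.Partition (i + 1) =>
          sp p.parts = μ + 2 ∧ (2 ≤ p.parts.sup ∧ p.parts.count p.parts.sup = 1))
        ∪ (Finset.univ.filter fun p : Nat.Partition (i + 1) =>
          sp p.parts = μ + 2 ∧ ¬(2 ≤ p.parts.sup ∧ p.parts.count p.parts.sup = 1)) := by
    rw [← Finset.filter_or]; apply Finset.filter_congr; intro p _; tauto
  rw [hsplit, Finset.card_union_of_disjoint, cardA μ i, cardB μ i h]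
  apply Finset.disjoint_left.mpr
  intro p hp hq
  simp only [Finset.mem_filter] at hp hq
  tauto

lemma main_count (μ i : ℕ) (h : μ ≤ i) :
    Nn (μ + 2) (i + 1) + Nn μ i = Nn (μ + 1) (i + 1) + Nn (μ + 1) i + Nn μ (i - μ) := by
  have h1 : Nn (μ + 2) (i + 1) = Nn (μ + 1) (i + 1) + Ee (μ + 2) (i + 1) := by
    exact Nn_succ (μ + 1) (i + 1)
  have h2 := Nn_succ μ i
  have h3 := core μ i h
  omega

end P5

theorem stmt5
    (D : ℕ → Polynomial ℤ)
    (hD : ∀ m j : ℕ, (D m).coeff j =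
      (Nat.card {p : Nat.Partition j // p.parts.sup + Multiset.card p.parts ≤ m} : ℤ)) :
    D 0 = 1 ∧ D 1 = 1 ∧
    ∀ m : ℕ, 2 ≤ m →
      D m = (1 + Polynomial.X) * D (m - 1)
        + (Polynomial.X ^ (m - 1) - Polynomial.X) * D (m - 2) := by
  have hcoeff : ∀ m j : ℕ, (D m).coeff j = (P5.Nn m j : ℤ) := by
    intro m j
    rw [hD m j]
    norm_cast
    rw [Nat.card_eq_fintype_card, Fintype.card_subtype]
    rfl
  refine ⟨?_, ?_, ?_⟩
  · apply Polynomial.ext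
    intro j
    rw [hcoeff, Polynomial.coeff_one]
    rcases j with _ | k
    · rw [P5.Nn_zero]; simp
    · rw [P5.Nn_pos_zero (by omega)]; simp
  · apply Polynomial.ext
    intro j
    rw [hcoeff, Polynomial.coeff_one]
    rcases j with _ | k
    · rw [P5.Nn_zero]; simp
    · rw [P5.Nn_pos_zero (by omega)]; simp
  · intro m hm
    obtain ⟨μ, rfl⟩ : ∃ μ, m = μ + 2 := ⟨m - 2, by omega⟩
    have e1 : μ + 2 - 1 = μ + 1 := rfl
    have e2 : μ + 2 - 2 = μ := rfl
    rw [e1, e2]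
    apply Polynomial.ext
    intro j
    rw [show (1 + Polynomial.X) * D (μ + 1) + (Polynomial.X ^ (μ + 1) - Polynomial.X) * D μ
        = D (μ + 1) + D (μ + 1) * Polynomial.X ^ 1
          + (D μ * Polynomial.X ^ (μ + 1) - D μ * Polynomial.X ^ 1) from by ring]
    simp only [Polynomial.coeff_add, Polynomial.coeff_sub, Polynomial.coeff_mul_X_pow', hcoeff]
    rcases j with _ | k
    · simp only [if_neg (by omega : ¬ 1 ≤ 0), if_neg (by omega : ¬ μ + 1 ≤ 0)]
      rw [P5.Nn_zero, P5.Nn_zero]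
      ring
    · rw [if_pos (by omega : 1 ≤ k + 1)]
      by_cases hk : μ ≤ k
      · rw [if_pos (by omega : μ + 1 ≤ k + 1)]
        have h := P5.main_count μ k hk
        have e3 : k + 1 - 1 = k := rfl
        have e4 : k + 1 - (μ + 1) = k - μ := by omega
        rw [e3, e4]
        push_cast
        omega
      · rw [if_neg (by omega : ¬ μ + 1 ≤ k + 1)]
        have e3 : k + 1 - 1 = k := rfl
        rw [e3]
        have h1 : P5.Nn (μ + 2) (k + 1) = P5.Nn (μ + 1) (k + 1) :=
          P5.Nn_stab (by omega)
        have h2 : P5.Nn (μ + 1) k = P5.Nn μ k := P5.Nn_stab (by omega)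
        push_cast
        omega
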